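/- Let V be a nonnegative random variable with density f and cdf F, and let h : [0,∞) → [0,∞) be continuous with E[∫₀^V |h(v)| dv] < ∞. Then E[ψ(V)·h(V)] = E[∫₀^V v dh(v)], where ψ(v) = v − (1−F(v))/f(v) and the inner integral is a Lebesgue–Stieltjes integral with respect to h. -/

import Mathlib

open MeasureTheory

open Set


lemma aux_leftLim (h : StieltjesFunction ℝ) (hcont : Continuous h) (a : ℝ) :
    Function.leftLim (h : ℝ → ℝ) a = h a :=
  leftLim_eq_of_tendsto
    ((hcont.tendsto a).mono_left nhdsWithin_le_nhds)

lemma aux_intOn (h : StieltjesFunction ℝ) (v : ℝ) :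
    IntegrableOn (fun x => x) (Set.Ioc 0 v) h.measure := by
  apply Measure.integrableOn_of_bounded (M := max v 0)
  · rw [h.measure_Ioc]; exact ENNReal.ofReal_ne_top
  · exact aestronglyMeasurable_id
  · filter_upwards [self_mem_ae_restrict measurableSet_Ioc] with x hx
    rw [Real.norm_eq_abs, abs_of_pos hx.1]
    exact le_max_of_le_left hx.2

/-- the lintegral form of the inner Stieltjes integral -/
lemma aux_L (h : StieltjesFunction ℝ) (hcont : Continuous h) (v : ℝ) :
    ∫⁻ x in Set.Ioc (0:ℝ) v, ENNReal.ofReal x ∂h.measure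
      = ∫⁻ t in Set.Ioc (0:ℝ) v, ENNReal.ofReal (h v - h t) := by
  have hfin : IsFiniteMeasure (h.measure.restrict (Set.Ioc 0 v)) := by
    constructor
    rw [Measure.restrict_apply_univ, h.measure_Ioc]
    exact ENNReal.ofReal_lt_top
  have h1 : ∫⁻ x in Set.Ioc (0:ℝ) v, ENNReal.ofReal x ∂h.measure
      = ∫⁻ t in Set.Ioi (0:ℝ), (h.measure.restrict (Set.Ioc 0 v)) {a | t ≤ a} := by
    refine lintegral_eq_lintegral_meas_le _ ?_ aemeasurable_id
    filter_upwards [self_mem_ae_restrict measurableSet_Ioc] with x hx using hx.1.le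
  rw [h1]
  have h2 : ∀ t ∈ Set.Ioi (0:ℝ), (h.measure.restrict (Set.Ioc 0 v)) {a | t ≤ a}
      = ENNReal.ofReal (h v - h t) := by
    intro t ht
    have : {a : ℝ | t ≤ a} = Set.Ici t := rfl
    rw [this, Measure.restrict_apply measurableSet_Ici]
    have h3 : Set.Ici t ∩ Set.Ioc 0 v = Set.Icc t v := by
      ext x
      simp only [Set.mem_inter_iff, Set.mem_Ici, Set.mem_Ioc, Set.mem_Icc]
      constructor
      · rintro ⟨h1, _, h2⟩; exact ⟨h1, h2⟩
      · rintro ⟨h1, h2⟩; exact ⟨h1, lt_of_lt_of_le ht h1, h2⟩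
    rw [h3, h.measure_Icc, aux_leftLim h hcont]
  rw [setLIntegral_congr_fun (μ := volume) (s := Set.Ioi (0:ℝ)) measurableSet_Ioi h2]
  rcases le_or_gt 0 v with hv | hv
  · have hsplit : Set.Ioc (0:ℝ) v ∪ Set.Ioi v = Set.Ioi 0 := Set.Ioc_union_Ioi_eq_Ioi hv
    rw [← hsplit, lintegral_union measurableSet_Ioi Set.Ioc_disjoint_Ioi_same]
    have hz : ∫⁻ t in Set.Ioi v, ENNReal.ofReal (h v - h t) = 0 := by
      rw [setLIntegral_congr_fun (μ := volume) (s := Set.Ioi v) measurableSet_Ioi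
        (fun ⦃t⦄ (ht : v < t) =>
          ENNReal.ofReal_eq_zero.mpr (by linarith [h.mono ht.le])), lintegral_zero]
    rw [hz, add_zero]
  · rw [Set.Ioc_eq_empty (by exact fun hc => absurd (lt_trans hc hv) (lt_irrefl 0) : ¬ (0:ℝ) < v)]
    rw [setLIntegral_congr_fun (μ := volume) (s := Set.Ioi (0:ℝ)) measurableSet_Ioi
      (fun ⦃t⦄ (ht : 0 < t) =>
        ENNReal.ofReal_eq_zero.mpr (by linarith [h.mono (le_of_lt (lt_trans hv ht))])), lintegral_zero]
    simp

lemma aux_key (h : StieltjesFunction ℝ) (hcont : Continuous h) (v : ℝ) (hv : 0 ≤ v) :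
    ∫ x in Set.Ioc (0:ℝ) v, x ∂h.measure = v * h v - ∫ t in Set.Ioc (0:ℝ) v, h t := by
  have hR : IntegrableOn (fun t => h v - h t) (Set.Ioc 0 v) volume :=
    (continuous_const.sub hcont).integrableOn_Ioc
  have hRnn : 0 ≤ᵐ[volume.restrict (Set.Ioc 0 v)] fun t => h v - h t := by
    filter_upwards [self_mem_ae_restrict measurableSet_Ioc] with t ht
    simpa using h.mono ht.2
  have hSnn : 0 ≤ᵐ[h.measure.restrict (Set.Ioc 0 v)] fun x : ℝ => x := by
    filter_upwards [self_mem_ae_restrict measurableSet_Ioc] with x hx using hx.1.le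
  have e1 : ENNReal.ofReal (∫ t in Set.Ioc (0:ℝ) v, (h v - h t))
      = ∫⁻ t in Set.Ioc (0:ℝ) v, ENNReal.ofReal (h v - h t) :=
    ofReal_integral_eq_lintegral_ofReal hR hRnn
  have e2 : ENNReal.ofReal (∫ x in Set.Ioc (0:ℝ) v, x ∂h.measure)
      = ∫⁻ x in Set.Ioc (0:ℝ) v, ENNReal.ofReal x ∂h.measure :=
    ofReal_integral_eq_lintegral_ofReal (aux_intOn h v) hSnn
  have e3 : ∫ x in Set.Ioc (0:ℝ) v, x ∂h.measure = ∫ t in Set.Ioc (0:ℝ) v, (h v - h t) := by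
    rw [← ENNReal.ofReal_eq_ofReal_iff (integral_nonneg_of_ae hSnn) (integral_nonneg_of_ae hRnn),
      e1, e2, aux_L h hcont v]
  rw [e3, integral_sub (integrableOn_const (C := h v) (by rw [Real.volume_Ioc]; exact ENNReal.ofReal_ne_top) : IntegrableOn (fun _ : ℝ => h v) (Set.Ioc 0 v) volume) hcont.integrableOn_Ioc,
    setIntegral_const, Real.volume_real_Ioc_of_le (by linarith), smul_eq_mul]
  ring_nf

lemma aux_fubini (P : Measure ℝ) [IsFiniteMeasure P] (g : ℝ → ENNReal) (hg : Measurable g) :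
    ∫⁻ v, ∫⁻ t in Set.Ioc (0:ℝ) v, g t ∂volume ∂P
      = ∫⁻ t in Set.Ioi (0:ℝ), g t * P (Set.Ici t) ∂volume := by
  set S : Set (ℝ × ℝ) := {p : ℝ × ℝ | 0 < p.2 ∧ p.2 ≤ p.1} with hSdef
  have hS : MeasurableSet S :=
    (measurableSet_lt measurable_const measurable_snd).inter
      (measurableSet_le measurable_snd measurable_fst)
  set k : ℝ × ℝ → ENNReal := S.indicator (fun p => g p.2) with hkdef
  have hk : Measurable k := (hg.comp measurable_snd).indicator hS
  calc ∫⁻ v, ∫⁻ t in Set.Ioc (0:ℝ) v, g t ∂volume ∂P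
      = ∫⁻ v, ∫⁻ t, k (v, t) ∂volume ∂P := by
        refine lintegral_congr fun v => ?_
        have : (fun t => k (v, t)) = (Set.Ioc (0:ℝ) v).indicator g := by
          funext t
          simp [hkdef, Set.indicator_apply, hSdef, Set.mem_Ioc]
        rw [this, lintegral_indicator measurableSet_Ioc]
    _ = ∫⁻ t, ∫⁻ v, k (v, t) ∂P ∂volume := lintegral_lintegral_swap hk.aemeasurable
    _ = ∫⁻ t, (Set.Ioi (0:ℝ)).indicator (fun t => g t * P (Set.Ici t)) t ∂volume := by
        refine lintegral_congr fun t => ?_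
        by_cases ht : 0 < t
        · have : (fun v => k (v, t)) = (Set.Ici t).indicator (fun _ => g t) := by
            funext v
            simp [hkdef, Set.indicator_apply, hSdef, Set.mem_Ici, ht]
          rw [this, lintegral_indicator_const measurableSet_Ici]
          simp [Set.indicator_apply, ht]
        · have : (fun v => k (v, t)) = fun _ => 0 := by
            funext v
            simp [hkdef, Set.indicator_apply, hSdef, ht]
          rw [this, lintegral_zero]
          simp [Set.indicator_apply, ht]
    _ = ∫⁻ t in Set.Ioi (0:ℝ), g t * P (Set.Ici t) ∂volume :=
        lintegral_indicator measurableSet_Ioi _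

lemma aux_fin {μ : Measure ℝ} (g : ℝ → ℝ) (hg : Integrable g μ) :
    ∫⁻ v, ENNReal.ofReal (g v) ∂μ ≠ ⊤ := by
  refine (lt_of_le_of_lt (lintegral_mono fun v => ?_) hg.2).ne
  rw [Real.enorm_eq_ofReal_abs]
  exact ENNReal.ofReal_le_ofReal (le_abs_self _)

/-- Covariance identity between the virtual valuation `ψ(v) = v − (1−F(v))/f(v)` and a
continuous nonnegative transformation `h` (a Stieltjes function, so that the
Lebesgue–Stieltjes measure `dh` is available):
`E[ψ(V)·h(V)] = E[∫₀^V v dh(v)]`. -/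
theorem stmt_4 (f : ℝ → ℝ) (P : Measure ℝ) [IsProbabilityMeasure P]
    (hP : P = (volume.restrict (Set.Ici (0 : ℝ))).withDensity (fun v => ENNReal.ofReal (f v)))
    (hfm : Measurable f) (hfpos : ∀ v ∈ Set.Ici (0 : ℝ), 0 < f v)
    (h : StieltjesFunction ℝ) (hcont : Continuous h)
    (hnonneg : ∀ v ∈ Set.Ici (0 : ℝ), 0 ≤ h v)
    (hint : Integrable (fun v => ∫ x in Set.Ioc (0 : ℝ) v, |h x|) P)
    (hVh : Integrable (fun v => v * h v) P) :
    ∫ v, (v - (1 - (P (Set.Iic v)).toReal) / f v) * h v ∂P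
      = ∫ v, (∫ x in Set.Ioc (0 : ℝ) v, x ∂h.measure) ∂P := by
  have hhm : Measurable (h : ℝ → ℝ) := hcont.measurable
  -- P gives no mass to negatives and to points
  have hIio : P (Set.Iio 0) = 0 := by
    rw [hP, withDensity_apply _ measurableSet_Iio,
      Measure.restrict_restrict measurableSet_Iio]
    have : Set.Iio (0:ℝ) ∩ Set.Ici 0 = ∅ := by
      ext x; simp only [Set.mem_inter_iff, Set.mem_Iio, Set.mem_Ici, Set.mem_empty_iff_false,
        iff_false, not_and, not_le]
      intro hx; exact hx
    rw [this]; simp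
  have hae : ∀ᵐ v ∂P, 0 ≤ v := by
    rw [ae_iff]
    have : {v : ℝ | ¬ 0 ≤ v} = Set.Iio 0 := by ext x; simp [not_le]
    rw [this]; exact hIio
  have hatom : ∀ a : ℝ, P {a} = 0 := by
    intro a
    rw [hP, withDensity_apply _ (measurableSet_singleton a)]
    refine setLIntegral_measure_zero _ _ ?_
    rw [Measure.restrict_apply (measurableSet_singleton a)]
    exact measure_mono_null Set.inter_subset_left Real.volume_singleton
  have hIci : ∀ t : ℝ, P (Set.Ici t) = ENNReal.ofReal (1 - (P (Set.Iic t)).toReal) := by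
    intro t
    have h1 : P (Set.Ioi t) = 1 - P (Set.Iic t) := by
      rw [← Set.compl_Iic]; exact prob_compl_eq_one_sub measurableSet_Iic
    have h2 : P (Set.Ici t) = P (Set.Ioi t) := by
      refine le_antisymm ?_ (measure_mono Set.Ioi_subset_Ici_self)
      calc P (Set.Ici t) = P ({t} ∪ Set.Ioi t) := by
            rw [← Set.insert_eq, Set.Ioi_insert]
        _ ≤ P {t} + P (Set.Ioi t) := measure_union_le _ _
        _ = P (Set.Ioi t) := by rw [hatom t, zero_add]
    rw [ENNReal.ofReal_sub _ ENNReal.toReal_nonneg, ENNReal.ofReal_one,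
      ENNReal.ofReal_toReal (measure_ne_top P _), h2, h1]
  have hGnn : ∀ t : ℝ, 0 ≤ 1 - (P (Set.Iic t)).toReal := by
    intro t
    have : (P (Set.Iic t)).toReal ≤ 1 := by
      simpa using ENNReal.toReal_mono ENNReal.one_ne_top prob_le_one
    linarith
  have hFmono : Monotone (fun v : ℝ => P (Set.Iic v)) :=
    fun a b hab => measure_mono (Set.Iic_subset_Iic.mpr hab)
  have hFmeas : Measurable (fun v => (P (Set.Iic v)).toReal) :=
    ENNReal.measurable_toReal.comp hFmono.measurable
  have hmono1 : Monotone (fun v => ∫ x in Set.Ioc (0:ℝ) v, x ∂h.measure) := by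
    intro a b hab
    apply setIntegral_mono_set (aux_intOn h b)
    · filter_upwards [self_mem_ae_restrict measurableSet_Ioc] with x hx
      exact hx.1.le
    · exact (Set.Ioc_subset_Ioc_right hab).eventuallyLE
  have hm1 : Measurable (fun v => ∫ x in Set.Ioc (0:ℝ) v, x ∂h.measure) := hmono1.measurable
  -- withDensity reduction
  have hwd : ∀ g : ℝ → ENNReal, Measurable g →
      ∫⁻ v, g v ∂P = ∫⁻ v in Set.Ici (0:ℝ), ENNReal.ofReal (f v) * g v ∂volume := by
    intro g hg
    rw [hP, lintegral_withDensity_eq_lintegral_mul _ hfm.ennreal_ofReal hg]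
    rfl
  -- B computation
  have hB : ∫⁻ v, ENNReal.ofReal ((1 - (P (Set.Iic v)).toReal) / f v * h v) ∂P
      = ∫⁻ t in Set.Ioi (0:ℝ), ENNReal.ofReal (h t) * P (Set.Ici t) ∂volume := by
    rw [hwd (fun v => ENNReal.ofReal ((1 - (P (Set.Iic v)).toReal) / f v * h v)) (((measurable_const.sub hFmeas).div hfm).mul hhm).ennreal_ofReal]
    have e1 : ∀ v ∈ Set.Ici (0:ℝ),
        ENNReal.ofReal (f v) * ENNReal.ofReal ((1 - (P (Set.Iic v)).toReal) / f v * h v)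
          = ENNReal.ofReal ((1 - (P (Set.Iic v)).toReal) * h v) := by
      intro v hv
      rw [← ENNReal.ofReal_mul (le_of_lt (hfpos v hv))]
      congr 1
      field_simp
      rw [mul_assoc]; exact mul_div_cancel_left₀ _ (ne_of_gt (hfpos v hv))
    rw [setLIntegral_congr_fun (μ := volume) (s := Set.Ici (0:ℝ)) measurableSet_Ici
        e1,
      setLIntegral_congr (MeasureTheory.Ioi_ae_eq_Ici (a := (0:ℝ))).symm]
    refine setLIntegral_congr_fun (μ := volume) (s := Set.Ioi (0:ℝ)) measurableSet_Ioi
        (fun ⦃t⦄ (ht : 0 < t) => ?_)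
    rw [ENNReal.ofReal_mul (hGnn t), hIci t, mul_comm]
  -- Fubini for the layered representation
  have hBB : ∫⁻ v, ∫⁻ t in Set.Ioc (0:ℝ) v, ENNReal.ofReal (h t) ∂volume ∂P
      = ∫⁻ t in Set.Ioi (0:ℝ), ENNReal.ofReal (h t) * P (Set.Ici t) ∂volume :=
    aux_fubini P _ hhm.ennreal_ofReal
  -- finiteness
  have hAfin : ∫⁻ v, ENNReal.ofReal (v * h v) ∂P ≠ ⊤ := aux_fin _ hVh
  have hBBfin : ∫⁻ v, ∫⁻ t in Set.Ioc (0:ℝ) v, ENNReal.ofReal (h t) ∂volume ∂P ≠ ⊤ := by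
    refine (lt_of_le_of_lt (lintegral_mono fun v => ?_)
      (lt_of_le_of_lt le_rfl hint.2)).ne
    calc ∫⁻ t in Set.Ioc (0:ℝ) v, ENNReal.ofReal (h t) ∂volume
        ≤ ∫⁻ t in Set.Ioc (0:ℝ) v, ENNReal.ofReal (|h t|) ∂volume :=
          lintegral_mono fun t => ENNReal.ofReal_le_ofReal (le_abs_self _)
      _ = ENNReal.ofReal (∫ t in Set.Ioc (0:ℝ) v, |h t|) := by
          rw [ofReal_integral_eq_lintegral_ofReal hcont.abs.integrableOn_Ioc
            (ae_of_all _ fun t => abs_nonneg _)]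
      _ ≤ ‖∫ t in Set.Ioc (0:ℝ) v, |h t|‖ₑ := by
          rw [Real.enorm_eq_ofReal_abs]
          exact ENNReal.ofReal_le_ofReal (le_abs_self _)
  -- key pointwise decomposition, integrated
  have hmain : ∫⁻ v, ENNReal.ofReal (v * h v) ∂P
      = ∫⁻ v, ENNReal.ofReal (∫ x in Set.Ioc (0:ℝ) v, x ∂h.measure) ∂P
        + ∫⁻ v, ∫⁻ t in Set.Ioc (0:ℝ) v, ENNReal.ofReal (h t) ∂volume ∂P := by
    rw [← lintegral_add_left hm1.ennreal_ofReal]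
    refine lintegral_congr_ae ?_
    filter_upwards [hae] with v hv
    have e : ∫⁻ t in Set.Ioc (0:ℝ) v, ENNReal.ofReal (h t) ∂volume
        = ENNReal.ofReal (∫ t in Set.Ioc (0:ℝ) v, h t) := by
      rw [ofReal_integral_eq_lintegral_ofReal hcont.integrableOn_Ioc ?_]
      filter_upwards [self_mem_ae_restrict measurableSet_Ioc] with t ht
      exact hnonneg t ht.1.le
    rw [e, ← ENNReal.ofReal_add (setIntegral_nonneg measurableSet_Ioc fun x hx => hx.1.le)
      (setIntegral_nonneg measurableSet_Ioc fun t ht => hnonneg t ht.1.le)]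
    congr 1
    have := aux_key h hcont v hv
    linarith
  -- integrability of the hazard part
  have hg2nn : ∀ᵐ v ∂P, 0 ≤ (1 - (P (Set.Iic v)).toReal) / f v * h v := by
    filter_upwards [hae] with v hv
    exact mul_nonneg (div_nonneg (hGnn v) (le_of_lt (hfpos v hv))) (hnonneg v hv)
  have hg2sm : AEStronglyMeasurable (fun v => (1 - (P (Set.Iic v)).toReal) / f v * h v) P :=
    (((measurable_const.sub hFmeas).div hfm).mul hhm).aestronglyMeasurable
  have hInt2 : Integrable (fun v => (1 - (P (Set.Iic v)).toReal) / f v * h v) P := by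
    refine ⟨hg2sm, ?_⟩
    have e : ∫⁻ v, ‖(1 - (P (Set.Iic v)).toReal) / f v * h v‖ₑ ∂P
        = ∫⁻ v, ENNReal.ofReal ((1 - (P (Set.Iic v)).toReal) / f v * h v) ∂P := by
      refine lintegral_congr_ae ?_
      filter_upwards [hg2nn] with v hv
      rw [Real.enorm_eq_ofReal_abs, abs_of_nonneg hv]
    rw [HasFiniteIntegral, e, hB, ← hBB]
    exact lt_top_iff_ne_top.mpr hBBfin
  -- final conversions
  have eA : ∫ v, v * h v ∂P = (∫⁻ v, ENNReal.ofReal (v * h v) ∂P).toReal := by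
    refine integral_eq_lintegral_of_nonneg_ae ?_ hVh.1
    filter_upwards [hae] with v hv
    exact mul_nonneg hv (hnonneg v hv)
  have eB : ∫ v, (1 - (P (Set.Iic v)).toReal) / f v * h v ∂P
      = (∫⁻ v, ENNReal.ofReal ((1 - (P (Set.Iic v)).toReal) / f v * h v) ∂P).toReal :=
    integral_eq_lintegral_of_nonneg_ae hg2nn hg2sm
  have eC : ∫ v, (∫ x in Set.Ioc (0:ℝ) v, x ∂h.measure) ∂P
      = (∫⁻ v, ENNReal.ofReal (∫ x in Set.Ioc (0:ℝ) v, x ∂h.measure) ∂P).toReal :=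
    integral_eq_lintegral_of_nonneg_ae
      (ae_of_all _ fun v => setIntegral_nonneg measurableSet_Ioc fun x hx => hx.1.le)
      hm1.aestronglyMeasurable
  have hCfin : ∫⁻ v, ENNReal.ofReal (∫ x in Set.Ioc (0:ℝ) v, x ∂h.measure) ∂P ≠ ⊤ := by
    intro hc
    exact hAfin (by rw [hmain, hc, top_add])
  have htoReal : (∫⁻ v, ENNReal.ofReal (v * h v) ∂P).toReal
      = (∫⁻ v, ENNReal.ofReal (∫ x in Set.Ioc (0:ℝ) v, x ∂h.measure) ∂P).toReal
        + (∫⁻ v, ∫⁻ t in Set.Ioc (0:ℝ) v, ENNReal.ofReal (h t) ∂volume ∂P).toReal := by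
    rw [hmain, ENNReal.toReal_add hCfin hBBfin]
  simp only [sub_mul]
  rw [integral_sub hVh hInt2, eA, eB, eC, hB, ← hBB]
  linarith
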